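/- For every integer d ≥ 2, the map Ψ : D^{d-1} → SC_d(2,0;o) defined by Ψ(x) = ((x/2 + P_{1/4}, 1/4), ((−x_1/2, …, −x_{d-1}/2, 1/4), 1/4)) is well defined, i.e. for every x ∈ D^{d-1} both balls are contained in the closed upper unit semiball and are nonoverlapping; moreover π_c ∘ Ψ = J⁺, where J⁺ : D^{d-1} → S^{d-1} is given by J⁺(x) = x'/‖x'‖ with x' = (x_1, …, x_{d-1}, x_d/2). -/
import Mathlib

noncomputable section

/-- The last index of `Fin d` (corresponding to the last coordinate `x_d`). -/
def lastIdx (d : ℕ) (hd : 2 ≤ d) : Fin d := ⟨d - 1, by omega⟩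

/-- The point `P_{1/4} = (0, …, 0, 1/4)` of `ℝ^d`. -/
def Pquarter (d : ℕ) (hd : 2 ≤ d) : EuclideanSpace ℝ (Fin d) :=
  EuclideanSpace.single (lastIdx d hd) 4⁻¹

/-- The configuration space `SC_d(2,0;o)` of two nonoverlapping balls in the closed
upper unit semiball of `ℝ^d`. -/
def SC20o (d : ℕ) (hd : 2 ≤ d) :
    Set ((EuclideanSpace ℝ (Fin d) × ℝ) × (EuclideanSpace ℝ (Fin d) × ℝ)) :=
  {c | 0 < c.1.2 ∧ 0 < c.2.2 ∧
       c.1.1 (lastIdx d hd) ≥ c.1.2 ∧ c.2.1 (lastIdx d hd) ≥ c.2.2 ∧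
       ‖c.1.1‖ + c.1.2 ≤ 1 ∧ ‖c.2.1‖ + c.2.2 ≤ 1 ∧
       ‖c.1.1 - c.2.1‖ ≥ c.1.2 + c.2.2}

/-- The closed disc `D^{d-1} = {x ∈ S^{d-1} : x_d ≥ 0}`. -/
def upperHemi (d : ℕ) (hd : 2 ≤ d) : Set (EuclideanSpace ℝ (Fin d)) :=
  {z | ‖z‖ = 1 ∧ z (lastIdx d hd) ≥ 0}

/-- The raw formula of the projection `π_c`, sending `((x,r),(y,s))` to `(x−y)/‖x−y‖`. -/
def rawPi (d : ℕ) :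
    (EuclideanSpace ℝ (Fin d) × ℝ) × (EuclideanSpace ℝ (Fin d) × ℝ) →
      EuclideanSpace ℝ (Fin d) :=
  fun c => ‖c.1.1 - c.2.1‖⁻¹ • (c.1.1 - c.2.1)

/-- The raw formula of `Ψ = ψ_o ∘₁ f`, sending `x` to
`((x/2 + P_{1/4}, 1/4), ((−x_1/2, …, −x_{d-1}/2, 1/4), 1/4))`; the second center is
`−x/2` with its last coordinate replaced by `1/4`. -/
def bigPsi (d : ℕ) (hd : 2 ≤ d) :
    EuclideanSpace ℝ (Fin d) →
      (EuclideanSpace ℝ (Fin d) × ℝ) × (EuclideanSpace ℝ (Fin d) × ℝ) :=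
  fun x =>
    (((2 : ℝ)⁻¹ • x + Pquarter d hd, 4⁻¹),
     (-((2 : ℝ)⁻¹ • x) +
        EuclideanSpace.single (lastIdx d hd) (x (lastIdx d hd) / 2 + 4⁻¹), 4⁻¹))

/-- The vector `x' = (x_1, …, x_{d-1}, x_d/2)`, i.e. `x` with its last coordinate
halved. -/
def halveLast (d : ℕ) (hd : 2 ≤ d) :
    EuclideanSpace ℝ (Fin d) → EuclideanSpace ℝ (Fin d) :=
  fun x => x - EuclideanSpace.single (lastIdx d hd) (x (lastIdx d hd) / 2)

/-- The raw formula of `J⁺ : D^{d-1} → S^{d-1}`, `x ↦ x'/‖x'‖` with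
`x' = (x_1, …, x_{d-1}, x_d/2)`. -/
def Jplus (d : ℕ) (hd : 2 ≤ d) :
    EuclideanSpace ℝ (Fin d) → EuclideanSpace ℝ (Fin d) :=
  fun x => ‖halveLast d hd x‖⁻¹ • halveLast d hd x

open scoped InnerProductSpace

lemma aux_inner (d : ℕ) (hd : 2 ≤ d) (x : EuclideanSpace ℝ (Fin d)) (a : ℝ) :
    ⟪x, EuclideanSpace.single (lastIdx d hd) a⟫_ℝ = a * x (lastIdx d hd) := by
  simp [EuclideanSpace.inner_single_right, mul_comm]

lemma aux_diff (d : ℕ) (hd : 2 ≤ d) (x : EuclideanSpace ℝ (Fin d)) :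
    (bigPsi d hd x).1.1 - (bigPsi d hd x).2.1 = halveLast d hd x := by
  ext i
  simp only [bigPsi, halveLast, Pquarter, PiLp.sub_apply, PiLp.add_apply, PiLp.neg_apply,
    PiLp.smul_apply, EuclideanSpace.single_apply, smul_eq_mul]
  split_ifs <;> ring

/-- For every integer `d ≥ 2`, the map `Ψ : D^{d-1} → SC_d(2,0;o)`,
`x ↦ ((x/2 + P_{1/4}, 1/4), ((−x_1/2, …, −x_{d-1}/2, 1/4), 1/4))`, is well defined,
and `π_c ∘ Ψ = J⁺` where `J⁺(x) = x'/‖x'‖` with `x' = (x_1, …, x_{d-1}, x_d/2)`. -/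
theorem swissCheese_bigPsi_wellDefined_and_projects_to_Jplus (d : ℕ) (hd : 2 ≤ d) :
    (∀ x ∈ upperHemi d hd, bigPsi d hd x ∈ SC20o d hd) ∧
    (∀ x ∈ upperHemi d hd, rawPi d (bigPsi d hd x) = Jplus d hd x) := by
  constructor
  · intro x hx
    obtain ⟨hn, hpos⟩ := hx
    set L := lastIdx d hd with hL
    set t := x L with ht
    have ht1 : t ≤ 1 := by
      have h := real_inner_le_norm x (EuclideanSpace.single L (1 : ℝ))
      rw [aux_inner d hd x 1, hn, EuclideanSpace.norm_single] at h
      simpa using h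
    have h1 : ‖(2 : ℝ)⁻¹ • x + Pquarter d hd‖ ^ 2 = 1/4 + t/4 + 1/16 := by
      rw [norm_add_sq_real, real_inner_smul_left, Pquarter, aux_inner d hd x,
        norm_smul, EuclideanSpace.norm_single, hn]
      norm_num [← ht]
      ring
    have h2 : ‖-((2 : ℝ)⁻¹ • x) +
        EuclideanSpace.single L (t / 2 + 4⁻¹)‖ ^ 2 = 5/16 - t^2/4 := by
      rw [norm_add_sq_real, inner_neg_left, real_inner_smul_left, aux_inner d hd x,
        norm_neg, norm_smul, EuclideanSpace.norm_single, hn, ← ht]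
      rw [Real.norm_eq_abs, Real.norm_eq_abs, sq_abs]
      norm_num
      ring
    have h3 : ‖halveLast d hd x‖ ^ 2 = 1 - 3/4 * t^2 := by
      rw [halveLast, norm_sub_sq_real, aux_inner d hd x, hn, ← ht,
        EuclideanSpace.norm_single, Real.norm_eq_abs, sq_abs]
      ring
    refine ⟨by norm_num [bigPsi], by norm_num [bigPsi], ?_, ?_, ?_, ?_, ?_⟩
    · show ((2 : ℝ)⁻¹ • x + Pquarter d hd) L ≥ (4 : ℝ)⁻¹
      simp only [Pquarter, ← hL, PiLp.add_apply, PiLp.smul_apply,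
        EuclideanSpace.single_apply, if_true, smul_eq_mul]
      rw [← ht]
      linarith
    · show (-((2 : ℝ)⁻¹ • x) + EuclideanSpace.single L (t / 2 + 4⁻¹)) L ≥ (4 : ℝ)⁻¹
      simp only [PiLp.add_apply, PiLp.neg_apply, PiLp.smul_apply,
        EuclideanSpace.single_apply, if_true, smul_eq_mul]
      rw [← ht]
      linarith
    · show ‖(2 : ℝ)⁻¹ • x + Pquarter d hd‖ + (4 : ℝ)⁻¹ ≤ 1
      nlinarith [norm_nonneg ((2 : ℝ)⁻¹ • x + Pquarter d hd), h1, ht1]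
    · show ‖-((2 : ℝ)⁻¹ • x) + EuclideanSpace.single L (t / 2 + 4⁻¹)‖ + (4 : ℝ)⁻¹ ≤ 1
      nlinarith [norm_nonneg (-((2 : ℝ)⁻¹ • x) + EuclideanSpace.single L (t / 2 + 4⁻¹)), h2,
        sq_nonneg t]
    · show ‖(bigPsi d hd x).1.1 - (bigPsi d hd x).2.1‖ ≥ (4 : ℝ)⁻¹ + 4⁻¹
      rw [aux_diff]
      nlinarith [norm_nonneg (halveLast d hd x), h3, ht1, hpos]
  · intro x _
    rw [rawPi, Jplus, aux_diff]
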